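/- arXiv:2605.03044 — 2 statements merged into one kernel-verified Lean document; each statement's English description precedes it below -/
import Mathlib

section
/- Let α > 0 and define H_α(A) = ∑_{j=1}^∞ A^j / (j! · Γ(jα)) for A ≥ 0. Then there exist positive constants C_α and ρ_α (depending only on α) such that H_α(A) ≤ C_α · A · exp(ρ_α · A^{1/(1+α)}) for all A ≥ 0. -/
open Real MeasureTheory Set

-- Gamma(x) ≥ x^x e^{-2x} for x ≥ 1
theorem wb_gamma_lower (x : ℝ) (hx : 1 ≤ x) : x ^ x * Real.exp (-(2*x)) ≤ Real.Gamma x := by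
  have hx0 : (0:ℝ) < x := by linarith
  rw [Real.Gamma_eq_integral hx0]
  have hsub : Ioc x (2*x) ⊆ Ioi (0:ℝ) := fun t ht => lt_trans hx0 ht.1
  have hint : IntegrableOn (fun t : ℝ => Real.exp (-t) * t ^ (x - 1)) (Ioi 0) :=
    Real.GammaIntegral_convergent hx0
  have h1 : Real.exp (-(2*x)) * x ^ (x-1) * (volume (Ioc x (2*x))).toReal
      ≤ ∫ t in Ioc x (2*x), Real.exp (-t) * t ^ (x - 1) := by
    rw [mul_comm, ← smul_eq_mul, ← Measure.real_def]
    apply MeasureTheory.setIntegral_ge_of_const_le measurableSet_Ioc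
    · exact (measure_Ioc_lt_top).ne
    · intro t ht
      have h1 : Real.exp (-t) ≥ Real.exp (-(2*x)) := Real.exp_le_exp.mpr (by linarith [ht.2]) 
      have h2 : x ^ (x-1) ≤ t ^ (x-1) :=
        Real.rpow_le_rpow hx0.le ht.1.le (by linarith)
      exact mul_le_mul h1 h2 (Real.rpow_nonneg hx0.le _) (Real.exp_pos _).le
    · exact hint.mono_set hsub
  have h2 : ∫ t in Ioc x (2*x), Real.exp (-t) * t ^ (x - 1)
      ≤ ∫ t in Ioi 0, Real.exp (-t) * t ^ (x - 1) := by
    apply MeasureTheory.setIntegral_mono_set hint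
    · filter_upwards [MeasureTheory.ae_restrict_mem measurableSet_Ioi] with t ht using
        mul_nonneg (Real.exp_pos _).le (Real.rpow_nonneg (le_of_lt ht) _)
    · exact HasSubset.Subset.eventuallyLE hsub
  calc x ^ x * Real.exp (-(2*x)) 
      = Real.exp (-(2*x)) * x ^ (x-1) * (volume (Ioc x (2*x))).toReal := by
        rw [Real.volume_Ioc, ENNReal.toReal_ofReal (by linarith)]
        rw [show 2*x - x = x by ring]
        have hxx : x ^ (x-1) * x = x ^ x := by
          rw [← Real.rpow_add_one hx0.ne' (x-1)]; norm_num
        rw [mul_assoc, hxx]; ring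
    _ ≤ _ := le_trans h1 h2

theorem wb_gamma_lb_aux (y : ℝ) (hy : 1 ≤ y) : Real.exp (-2) ≤ Real.Gamma y := by
  have hy0 : (0:ℝ) < y := by linarith
  rw [Real.Gamma_eq_integral hy0]
  have hsub : Ioc (1:ℝ) 2 ⊆ Ioi (0:ℝ) := fun t ht => lt_trans one_pos ht.1
  have hint : IntegrableOn (fun t : ℝ => Real.exp (-t) * t ^ (y - 1)) (Ioi 0) :=
    Real.GammaIntegral_convergent hy0
  have h1 : Real.exp (-2) * (volume (Ioc (1:ℝ) 2)).toReal
      ≤ ∫ t in Ioc (1:ℝ) 2, Real.exp (-t) * t ^ (y - 1) := by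
    rw [mul_comm, ← smul_eq_mul, ← Measure.real_def]
    apply MeasureTheory.setIntegral_ge_of_const_le measurableSet_Ioc
    · exact (measure_Ioc_lt_top).ne
    · intro t ht
      have h2 : (1:ℝ) ≤ t ^ (y-1) := by
        have := Real.rpow_le_rpow zero_le_one ht.1.le (by linarith : (0:ℝ) ≤ y - 1)
        rwa [Real.one_rpow] at this
      calc Real.exp (-2) = Real.exp (-2) * 1 := by ring
        _ ≤ Real.exp (-t) * t ^ (y-1) :=
            mul_le_mul (Real.exp_le_exp.mpr (by linarith [ht.2])) h2 zero_le_one (Real.exp_pos _).le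
    · exact hint.mono_set hsub
  have h2 : ∫ t in Ioc (1:ℝ) 2, Real.exp (-t) * t ^ (y - 1)
      ≤ ∫ t in Ioi 0, Real.exp (-t) * t ^ (y - 1) := by
    apply MeasureTheory.setIntegral_mono_set hint
    · filter_upwards [MeasureTheory.ae_restrict_mem measurableSet_Ioi] with t ht using
        mul_nonneg (Real.exp_pos _).le (Real.rpow_nonneg (le_of_lt ht) _)
    · exact HasSubset.Subset.eventuallyLE hsub
  have : (volume (Ioc (1:ℝ) 2)).toReal = 1 := by
    rw [Real.volume_Ioc]; norm_num
  nlinarith [h1, h2, Real.exp_pos (-2)]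

theorem wb_gamma_lb (x : ℝ) (hx : 0 < x) : Real.exp (-2) ≤ Real.Gamma x := by
  rcases le_or_gt 1 x with h | h
  · exact wb_gamma_lb_aux x h
  · have h1 : Real.Gamma (x + 1) = x * Real.Gamma x := Real.Gamma_add_one hx.ne'
    have h2 : Real.exp (-2) ≤ Real.Gamma (x + 1) := wb_gamma_lb_aux _ (by linarith)
    have h3 : 0 < Real.Gamma x := Real.Gamma_pos_of_pos hx
    nlinarith

theorem wb_key (α : ℝ) (hα : 0 < α) : ∃ K : ℝ, 1 ≤ K ∧ ∀ m : ℕ, 1 ≤ m →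
    ((m.factorial : ℝ)) ^ α ≤ K ^ m * Real.Gamma (m * α) := by
  set m0 : ℕ := ⌈1/α⌉₊ with hm0
  refine ⟨max (max 1 (Real.exp (α * (2 - Real.log α)))) (((m0.factorial : ℝ)) ^ α * Real.exp 2),
    le_trans (le_max_left 1 _) (le_max_left _ _), ?_⟩
  set K := max (max 1 (Real.exp (α * (2 - Real.log α)))) (((m0.factorial : ℝ)) ^ α * Real.exp 2) with hK
  have hK1 : (1:ℝ) ≤ K := le_trans (le_max_left 1 _) (le_max_left _ _)
  intro m hm
  have hmR : (1:ℝ) ≤ (m:ℝ) := by exact_mod_cast hm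
  have hmpos : (0:ℝ) < m := by linarith
  have hxpos : 0 < (m:ℝ) * α := by positivity
  rcases le_or_gt 1 ((m:ℝ) * α) with hbig | hsmall
  · -- big case
    have hG := wb_gamma_lower _ hbig
    -- (m!)^α ≤ (m^m)^α = exp(α * m * log m)
    have hfact : ((m.factorial : ℝ)) ^ α ≤ Real.exp ((m:ℝ) * α * Real.log m) := by
      have h1 : ((m.factorial : ℝ)) ≤ (m:ℝ) ^ (m:ℕ) := by exact_mod_cast m.factorial_le_pow
      have h2 : ((m.factorial : ℝ)) ^ α ≤ ((m:ℝ) ^ (m:ℕ)) ^ α :=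
        Real.rpow_le_rpow (by positivity) h1 hα.le
      have h3 : ((m:ℝ) ^ (m:ℕ)) ^ α = Real.exp ((m:ℝ) * α * Real.log m) := by
        rw [← Real.rpow_natCast (m:ℝ) m, ← Real.rpow_mul hmpos.le,
          Real.rpow_def_of_pos hmpos]
        ring_nf
      linarith [h2, h3.le, h3.ge]
    -- Gamma lower in exp form
    have hGexp : Real.exp ((m:ℝ) * α * (Real.log m + Real.log α) - 2 * ((m:ℝ)*α))
        ≤ Real.Gamma ((m:ℝ) * α) := by
      have h4 : ((m:ℝ)*α) ^ ((m:ℝ)*α) = Real.exp ((m:ℝ)*α * (Real.log m + Real.log α)) := by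
        rw [Real.rpow_def_of_pos hxpos, Real.log_mul hmpos.ne' hα.ne']
        ring_nf
      calc Real.exp ((m:ℝ) * α * (Real.log m + Real.log α) - 2 * ((m:ℝ)*α))
          = ((m:ℝ)*α) ^ ((m:ℝ)*α) * Real.exp (-(2*((m:ℝ)*α))) := by
            rw [h4, ← Real.exp_add]; ring_nf
        _ ≤ _ := hG
    have hKpow : Real.exp ((m:ℝ) * (α * (2 - Real.log α))) ≤ K ^ m := by
      rw [Real.exp_nat_mul]
      exact pow_le_pow_left₀ (Real.exp_pos _).le
        (le_trans (le_max_right 1 _) (le_max_left _ _)) m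
    have hGpos : 0 < Real.Gamma ((m:ℝ)*α) := Real.Gamma_pos_of_pos hxpos
    calc ((m.factorial : ℝ)) ^ α ≤ Real.exp ((m:ℝ) * α * Real.log m) := hfact
      _ = Real.exp ((m:ℝ) * (α * (2 - Real.log α))) *
          Real.exp ((m:ℝ) * α * (Real.log m + Real.log α) - 2 * ((m:ℝ)*α)) := by
            rw [← Real.exp_add]; ring_nf
      _ ≤ K ^ m * Real.Gamma ((m:ℝ)*α) := by
          apply mul_le_mul hKpow hGexp (Real.exp_pos _).le (by positivity)
  · -- small case
    have hmle : m ≤ m0 := by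
      have h1 : (m:ℝ) ≤ 1/α := by
        rw [le_div_iff₀ hα]; linarith
      have h2 : (m:ℝ) ≤ (m0:ℝ) := le_trans h1 (Nat.le_ceil _)
      exact_mod_cast h2
    have hfle : ((m.factorial : ℝ)) ^ α ≤ ((m0.factorial : ℝ)) ^ α :=
      Real.rpow_le_rpow (by positivity) (by exact_mod_cast Nat.factorial_le hmle) hα.le
    have hG := wb_gamma_lb _ hxpos
    have hKK : ((m0.factorial : ℝ)) ^ α * Real.exp 2 ≤ K ^ m := by
      calc ((m0.factorial : ℝ)) ^ α * Real.exp 2 ≤ K := le_max_right _ _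
        _ ≤ K ^ m := le_self_pow₀ (by linarith) (by omega)
    calc ((m.factorial : ℝ)) ^ α ≤ ((m0.factorial : ℝ)) ^ α := hfle
      _ = ((m0.factorial : ℝ)) ^ α * Real.exp 2 * Real.exp (-2) := by
          rw [mul_assoc, ← Real.exp_add]; norm_num
      _ ≤ K ^ m * Real.Gamma ((m:ℝ)*α) := by
          apply mul_le_mul hKK hG (Real.exp_pos _).le (by positivity)

theorem wright_bound (α : ℝ) (hα : 0 < α) :
    ∃ C ρ : ℝ, 0 < C ∧ 0 < ρ ∧ ∀ A : ℝ, 0 ≤ A →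
      (∑' j : ℕ, A ^ (j + 1) / ((Nat.factorial (j + 1)) * Real.Gamma ((j + 1 : ℕ) * α)))
        ≤ C * A * Real.exp (ρ * A ^ (1 / (1 + α))) := by
  obtain ⟨K, hK1, hK⟩ := wb_key α hα
  have hs0 : (0:ℝ) < 1 + α := by linarith
  have hKpos : (0:ℝ) < K := by linarith
  refine ⟨K, (1 + α) * K ^ (1/(1+α)), by linarith, by positivity, ?_⟩
  intro A hA
  rcases eq_or_lt_of_le hA with h0 | hApos
  · simp [← h0]
  set s : ℝ := 1 + α with hs
  set B : ℝ := K * A with hB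
  have hBpos : 0 < B := by positivity
  set y : ℝ := B ^ (1/s) with hy
  have hypos : 0 < y := Real.rpow_pos_of_pos hBpos _
  have hsum_y : Summable (fun n : ℕ => y ^ n / (n.factorial : ℝ)) :=
    Real.summable_pow_div_factorial y
  have hexp : ∑' n : ℕ, y ^ n / (n.factorial : ℝ) = Real.exp y := by
    rw [Real.exp_eq_exp_ℝ, NormedSpace.exp_eq_tsum_div]
  have hterm_exp : ∀ j : ℕ, y ^ j / (j.factorial : ℝ) ≤ Real.exp y := by
    intro j
    rw [← hexp]
    exact Summable.le_tsum hsum_y j (fun i _ => by positivity)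
  set c : ℝ := K * A * Real.exp ((s - 1) * y) with hc
  have hcpos : 0 < c := by positivity
  set g : ℕ → ℝ := fun j => c * (y ^ j / (j.factorial : ℝ)) with hg
  have hsumg : Summable g := hsum_y.mul_left c
  set f : ℕ → ℝ := fun j => A ^ (j + 1) / ((Nat.factorial (j + 1)) * Real.Gamma ((j + 1 : ℕ) * α))
    with hf
  have hfnn : ∀ j, 0 ≤ f j := by
    intro j
    have hGpos : 0 < Real.Gamma (((j + 1 : ℕ) : ℝ) * α) := by
      apply Real.Gamma_pos_of_pos; positivity
    apply div_nonneg (by positivity)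
    positivity
  have hfg : ∀ j, f j ≤ g j := by
    intro j
    have hm := hK (j + 1) (Nat.le_add_left 1 j)
    have hGpos : 0 < Real.Gamma (((j + 1 : ℕ) : ℝ) * α) := by
      apply Real.Gamma_pos_of_pos; positivity
    have hfactpos : (0:ℝ) < ((j+1).factorial : ℝ) := by exact_mod_cast (j+1).factorial_pos
    have hfactpos' : (0:ℝ) < (j.factorial : ℝ) := by exact_mod_cast j.factorial_pos
    -- denominator lower bound
    have hden : ((j+1).factorial : ℝ) ^ s / K ^ (j+1)
        ≤ ((j+1).factorial : ℝ) * Real.Gamma (((j + 1 : ℕ) : ℝ) * α) := by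
      rw [div_le_iff₀ (by positivity)]
      calc ((j+1).factorial : ℝ) ^ s = ((j+1).factorial : ℝ) ^ (1:ℝ) * ((j+1).factorial : ℝ) ^ α := by
            rw [← Real.rpow_add hfactpos]
        _ = ((j+1).factorial : ℝ) * ((j+1).factorial : ℝ) ^ α := by rw [Real.rpow_one]
        _ ≤ ((j+1).factorial : ℝ) * (K ^ (j+1) * Real.Gamma (((j+1:ℕ):ℝ) * α)) := by
            apply mul_le_mul_of_nonneg_left _ hfactpos.le
            exact_mod_cast hm
        _ = ((j+1).factorial : ℝ) * Real.Gamma (((j + 1 : ℕ) : ℝ) * α) * K ^ (j+1) := by ring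
    have step1 : f j ≤ A ^ (j+1) * K ^ (j+1) / ((j+1).factorial : ℝ) ^ s := by
      rw [hf]
      have h1 : A ^ (j + 1) / ((Nat.factorial (j+1)) * Real.Gamma (((j + 1 : ℕ):ℝ) * α))
          ≤ A ^ (j+1) / (((j+1).factorial : ℝ) ^ s / K ^ (j+1)) :=
        div_le_div_of_nonneg_left (by positivity) (by positivity) hden
      rw [div_div_eq_mul_div] at h1
      exact h1
    have step2 : A ^ (j+1) * K ^ (j+1) / ((j+1).factorial : ℝ) ^ s
        ≤ K * A * (B ^ j / (j.factorial : ℝ) ^ s) := by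
      have hmono : (j.factorial : ℝ) ^ s ≤ ((j+1).factorial : ℝ) ^ s := by
        apply Real.rpow_le_rpow hfactpos'.le _ hs0.le
        exact_mod_cast Nat.factorial_le (Nat.le_succ j)
      have : A ^ (j+1) * K ^ (j+1) = K * A * B ^ j := by
        rw [hB, mul_pow, pow_succ, pow_succ]; ring
      rw [this, mul_div_assoc]
      apply mul_le_mul_of_nonneg_left _ (by positivity)
      apply div_le_div_of_nonneg_left (by positivity) (by positivity) hmono
    have step3 : B ^ j / (j.factorial : ℝ) ^ s = (y ^ j / (j.factorial : ℝ)) ^ s := by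
      rw [Real.div_rpow (by positivity) hfactpos'.le]
      congr 1
      rw [hy, ← Real.rpow_natCast (B ^ (1/s)) j, ← Real.rpow_natCast B j,
        ← Real.rpow_mul hBpos.le, ← Real.rpow_mul hBpos.le]
      congr 1
      field_simp
    have step4 : (y ^ j / (j.factorial : ℝ)) ^ s ≤ Real.exp ((s-1) * y) * (y ^ j / (j.factorial : ℝ)) := by
      have hqpos : (0:ℝ) < y ^ j / (j.factorial : ℝ) := by positivity
      have : (y ^ j / (j.factorial : ℝ)) ^ s
          = (y ^ j / (j.factorial : ℝ)) ^ (s - 1) * (y ^ j / (j.factorial : ℝ)) := by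
        have h' : (y ^ j / (j.factorial : ℝ)) ^ s
            = (y ^ j / (j.factorial : ℝ)) ^ (s - 1) * (y ^ j / (j.factorial : ℝ)) ^ (1:ℝ) := by
          rw [← Real.rpow_add hqpos]; norm_num
        rwa [Real.rpow_one] at h'
      rw [this]
      apply mul_le_mul_of_nonneg_right _ hqpos.le
      calc (y ^ j / (j.factorial : ℝ)) ^ (s - 1) ≤ (Real.exp y) ^ (s - 1) :=
            Real.rpow_le_rpow hqpos.le (hterm_exp j) (by simp [hs]; linarith)
        _ = Real.exp ((s-1) * y) := by
            rw [← Real.exp_mul, mul_comm]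
    calc f j ≤ A ^ (j+1) * K ^ (j+1) / ((j+1).factorial : ℝ) ^ s := step1
      _ ≤ K * A * (B ^ j / (j.factorial : ℝ) ^ s) := step2
      _ = K * A * ((y ^ j / (j.factorial : ℝ)) ^ s) := by rw [step3]
      _ ≤ K * A * (Real.exp ((s-1) * y) * (y ^ j / (j.factorial : ℝ))) := by
          apply mul_le_mul_of_nonneg_left step4 (by positivity)
      _ = g j := by rw [hg, hc]; ring
  have hsumf : Summable f := Summable.of_nonneg_of_le hfnn hfg hsumg
  have htsum : (∑' j, f j) ≤ ∑' j, g j := Summable.tsum_le_tsum hfg hsumf hsumg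
  have htsumg : (∑' j, g j) = c * Real.exp y := by
    rw [hg, tsum_mul_left, hexp]
  have hfinal : c * Real.exp y = K * A * Real.exp ((1 + α) * K ^ (1/(1+α)) * A ^ (1/(1+α))) := by
    rw [hc, mul_assoc, ← Real.exp_add]
    congr 1
    have hyval : y = K ^ (1/s) * A ^ (1/s) := by
      rw [hy, hB, Real.mul_rpow hKpos.le hA]
    rw [hyval]
    simp only [hs]
    ring
  calc (∑' j : ℕ, A ^ (j + 1) / ((Nat.factorial (j + 1)) * Real.Gamma ((j + 1 : ℕ) * α)))
      = ∑' j, f j := rfl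
    _ ≤ ∑' j, g j := htsum
    _ = K * A * Real.exp ((1 + α) * K ^ (1/(1+α)) * A ^ (1/(1+α))) := by
        rw [htsumg, hfinal]
    _ = K * A * Real.exp ((1 + α) * K ^ (1/(1+α)) * A ^ (1/(1+α))) := rfl
end

section
/- Fix p ∈ (1,2), x > 0, and α = (2−p)/(p−1). Then there exist ε ∈ (0, x/2), a₀ > 0, c₀ > 0, and C₀ > 0 such that, for all sufficiently small h > 0 and all t ∈ (0, ε], the Tweedie subdensity satisfies k_h(t;x) ≤ C₀ · h^{−a₀} · e^{−c₀/h} · t^{α−1}. -/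
open Real

lemma my_choose_le_two_pow (n k : ℕ) : n.choose k ≤ 2 ^ n := by
  rcases le_or_gt k n with h | h
  · calc n.choose k ≤ ∑ i ∈ Finset.range (n+1), n.choose i :=
        Finset.single_le_sum (f := fun i => n.choose i) (fun _ _ => Nat.zero_le _)
          (Finset.mem_range.mpr (Nat.lt_succ_of_le h))
    _ = 2 ^ n := Nat.sum_range_choose n
  · rw [Nat.choose_eq_zero_of_lt h]; exact Nat.zero_le _

lemma gamma_ge_one {y : ℝ} (hy : 2 ≤ y) : 1 ≤ Real.Gamma y := by
  have := Real.Gamma_strictMonoOn_Ici.monotoneOn (by norm_num : (2:ℝ) ∈ Set.Ici 2)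
    (Set.mem_Ici.mpr hy) hy
  rwa [Real.Gamma_two] at this

lemma gamma_ge_half_aux {y : ℝ} (h1 : 1 ≤ y) (hy2 : y ≤ 2) : 1/2 ≤ Real.Gamma y := by
  have hy : 0 < y := by linarith
  have hrec : Real.Gamma (y + 1) = y * Real.Gamma y := Real.Gamma_add_one (ne_of_gt hy)
  have h2 : 1 ≤ Real.Gamma (y + 1) := gamma_ge_one (by linarith)
  nlinarith [Real.Gamma_pos_of_pos hy]

lemma gamma_ge_half {y : ℝ} (hy : 0 < y) (hy2 : y ≤ 2) : 1/2 ≤ Real.Gamma y := by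
  rcases le_or_gt 1 y with h1 | h1
  · exact gamma_ge_half_aux h1 hy2
  · have hrec : Real.Gamma (y + 1) = y * Real.Gamma y := Real.Gamma_add_one (ne_of_gt hy)
    have h2 : 1/2 ≤ Real.Gamma (y + 1) := gamma_ge_half_aux (by linarith) (by linarith)
    nlinarith [Real.Gamma_pos_of_pos hy]

lemma gamma_floor_lb {y : ℝ} (hy : 0 < y) :
    ((Nat.floor y).factorial : ℝ) ≤ 2 * ((Nat.floor y : ℝ) + 1) * Real.Gamma y := by
  rcases le_or_gt 2 y with h2 | h2
  · set m := Nat.floor y with hm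
    have hm2 : 2 ≤ m := Nat.le_floor (by exact_mod_cast h2)
    have hmy : (m : ℝ) ≤ y := Nat.floor_le hy.le
    have hmono := Real.Gamma_strictMonoOn_Ici.monotoneOn
      (Set.mem_Ici.mpr (by exact_mod_cast hm2 : (2:ℝ) ≤ (m:ℝ))) (Set.mem_Ici.mpr h2) hmy
    have hfac : Real.Gamma (m : ℝ) = ((m-1).factorial : ℝ) := by
      have h := Real.Gamma_nat_eq_factorial (m - 1)
      have hc : ((m - 1 : ℕ) : ℝ) + 1 = (m : ℝ) := by
        have h1 : m - 1 + 1 = m := by omega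
        exact_mod_cast congrArg (Nat.cast (R := ℝ)) h1
      rwa [hc] at h
    have hfac2 : (m.factorial : ℝ) = (m : ℝ) * ((m-1).factorial : ℝ) := by
      have := Nat.mul_factorial_pred (show m ≠ 0 by omega)
      exact_mod_cast this.symm
    have hpos : (0:ℝ) < ((m-1).factorial : ℝ) := by positivity
    nlinarith [hfac ▸ hmono]
  · have hfl : Nat.floor y ≤ 1 := by
      have h3 : Nat.floor y < 2 := (Nat.floor_lt hy.le).mpr (by exact_mod_cast h2)
      omega
    have hge : 1/2 ≤ Real.Gamma y := gamma_ge_half hy h2.le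
    interval_cases h : Nat.floor y <;> simp [h] <;> nlinarith

lemma exp_tsum (x : ℝ) : ∑' n : ℕ, x ^ n / (Nat.factorial n) = Real.exp x := by
  rw [Real.exp_eq_exp_ℝ, NormedSpace.exp_eq_tsum_div]

lemma core_bound (α A : ℝ) (hα : 0 < α) (hA : 0 ≤ A) (k : ℕ) (hk : 1 ≤ k) :
    A ^ k / (k.factorial * Real.Gamma ((k:ℝ)*α)) ≤
      2 * (2*(A+1) ^ ((1:ℝ)/(1+α))) * (2*(2*(A+1) ^ ((1:ℝ)/(1+α)))) ^ (k + Nat.floor ((k:ℝ)*α))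
        / ((k + Nat.floor ((k:ℝ)*α)).factorial : ℝ) := by
  have hkα : 0 < (k:ℝ)*α := by
    have : (1:ℝ) ≤ (k:ℝ) := by exact_mod_cast hk
    nlinarith
  set m := Nat.floor ((k:ℝ)*α) with hmdef
  set n := k + m with hndef
  set B := 2*(A+1) ^ ((1:ℝ)/(1+α)) with hBdef
  have h1α : (0:ℝ) < 1 + α := by linarith
  have hB1 : (1:ℝ) ≤ B := by
    have : (1:ℝ) ≤ (A+1) ^ ((1:ℝ)/(1+α)) :=
      Real.one_le_rpow (by linarith) (by positivity)
    rw [hBdef]; linarith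
  have hBpos : (0:ℝ) < B := by linarith
  have hΓpos : 0 < Real.Gamma ((k:ℝ)*α) := Real.Gamma_pos_of_pos hkα
  have hΓ : (m.factorial : ℝ) ≤ 2*((m:ℝ)+1) * Real.Gamma ((k:ℝ)*α) := gamma_floor_lb hkα
  have hfact : ((n.factorial : ℝ)) ≤ 2^n * (k.factorial : ℝ) * (m.factorial : ℝ) := by
    have h1 : n.choose k * k.factorial * m.factorial = n.factorial := by
      have := Nat.choose_mul_factorial_mul_factorial (Nat.le_add_right k m)
      simpa [hndef] using this
    have h2 : n.factorial ≤ 2^n * k.factorial * m.factorial := by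
      rw [← h1]
      exact Nat.mul_le_mul_right _ (Nat.mul_le_mul_right _ (my_choose_le_two_pow n k))
    exact_mod_cast h2
  have hmle : (m:ℝ) ≤ (k:ℝ)*α := Nat.floor_le hkα.le
  have hmgt : (k:ℝ)*α < (m:ℝ) + 1 := Nat.lt_floor_add_one _
  have key : A^k * 2^n ≤ B^(n+1) := by
    have e1 : (A+1) ^ (k:ℕ) = ((A+1) ^ ((1:ℝ)/(1+α))) ^ ((k:ℝ)*(1+α)) := by
      rw [← Real.rpow_natCast (A+1) k, ← Real.rpow_mul (by linarith : (0:ℝ) ≤ A+1)]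
      congr 1
      field_simp
    have e2 : (2:ℝ)^(n:ℕ) ≤ (2:ℝ) ^ ((k:ℝ)*(1+α)) := by
      rw [← Real.rpow_natCast 2 n]
      apply Real.rpow_le_rpow_of_exponent_le one_le_two
      push_cast [hndef]
      nlinarith
    have e3 : A^k ≤ (A+1)^k := pow_le_pow_left₀ hA (by linarith) k
    have e4 : A^k * 2^n ≤ ((A+1) ^ ((1:ℝ)/(1+α))) ^ ((k:ℝ)*(1+α)) * (2:ℝ) ^ ((k:ℝ)*(1+α)) := by
      apply mul_le_mul (e1 ▸ e3) e2 (by positivity) (by positivity)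
    have e5 : ((A+1) ^ ((1:ℝ)/(1+α))) ^ ((k:ℝ)*(1+α)) * (2:ℝ) ^ ((k:ℝ)*(1+α))
        = B ^ ((k:ℝ)*(1+α)) := by
      rw [hBdef, mul_comm (2:ℝ) _, Real.mul_rpow (by positivity) (by norm_num)]
    have e6 : B ^ ((k:ℝ)*(1+α)) ≤ B ^ (((n:ℕ)+1 : ℝ)) := by
      apply Real.rpow_le_rpow_of_exponent_le hB1
      push_cast [hndef]
      nlinarith
    have e7 : B ^ (((n:ℕ)+1 : ℝ)) = B^(n+1) := by
      rw [← Real.rpow_natCast B (n+1)]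
      norm_num
    calc A^k * 2^n ≤ _ := e4
      _ = B ^ ((k:ℝ)*(1+α)) := e5
      _ ≤ B ^ (((n:ℕ)+1:ℝ)) := e6
      _ = B^(n+1) := e7
  have hm2n : ((m:ℝ)+1) ≤ 2^n := by
    have h3 : m + 1 ≤ 2^n := by
      have := Nat.lt_two_pow_self (n := n)
      omega
    exact_mod_cast h3
  -- final assembly
  clear_value B n m
  rw [div_le_div_iff₀ (by positivity) (by positivity)]
  have hknn : (0:ℝ) ≤ (k.factorial:ℝ) := by positivity
  calc A^k * (n.factorial:ℝ) ≤ A^k * (2^n * (k.factorial:ℝ) * (m.factorial:ℝ)) := by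
        apply mul_le_mul_of_nonneg_left hfact (by positivity)
    _ = (A^k * 2^n) * ((k.factorial:ℝ) * (m.factorial:ℝ)) := by ring
    _ ≤ B^(n+1) * ((k.factorial:ℝ) * (m.factorial:ℝ)) := by
        apply mul_le_mul_of_nonneg_right key (by positivity)
    _ ≤ B^(n+1) * ((k.factorial:ℝ) * (2*((m:ℝ)+1) * Real.Gamma ((k:ℝ)*α))) := by
        apply mul_le_mul_of_nonneg_left _ (by positivity)
        apply mul_le_mul_of_nonneg_left hΓ hknn
    _ = (((m:ℝ)+1) * 2) * B^(n+1) * ((k.factorial:ℝ) * Real.Gamma ((k:ℝ)*α)) := by ring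
    _ ≤ ((2:ℝ)^n * 2) * B^(n+1) * ((k.factorial:ℝ) * Real.Gamma ((k:ℝ)*α)) := by
        have hrg : (0:ℝ) ≤ (k.factorial:ℝ) * Real.Gamma ((k:ℝ)*α) := by positivity
        have hb : (0:ℝ) ≤ B^(n+1) := by positivity
        nlinarith [mul_le_mul_of_nonneg_right hm2n (mul_nonneg hb hrg)]
    _ = 2 * B * (2*B)^n * ((k.factorial:ℝ) * Real.Gamma ((k:ℝ)*α)) := by
        rw [mul_pow]; ring

set_option maxHeartbeats 2000000 in
theorem tweedie_near_zero_bound (p x : ℝ) (hp1 : 1 < p) (hp2 : p < 2) (hx : 0 < x) :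
    let α := (2 - p) / (p - 1)
    ∃ ε a₀ c₀ C₀ : ℝ, 0 < ε ∧ ε < x / 2 ∧ 0 < a₀ ∧ 0 < c₀ ∧ 0 < C₀ ∧
      ∃ h₀ : ℝ, 0 < h₀ ∧ ∀ h : ℝ, 0 < h → h ≤ h₀ → ∀ t : ℝ, 0 < t → t ≤ ε →
        (Real.exp (-(x ^ (2 - p) / (h * (2 - p)))) *
          ∑' j : ℕ, ((x ^ (2 - p) / (h * (2 - p))) ^ (j + 1) / (Nat.factorial (j + 1))) *
            (t ^ (((j : ℝ) + 1) * α - 1) * Real.exp (-t / (h * (p - 1) * x ^ (p - 1)))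
              / (Real.Gamma (((j : ℝ) + 1) * α)
                  * (h * (p - 1) * x ^ (p - 1)) ^ (((j : ℝ) + 1) * α))))
          ≤ C₀ * h ^ (-a₀) * Real.exp (-c₀ / h) * t ^ (α - 1) := by
  intro α
  have hα : 0 < α := div_pos (by linarith) (by linarith)
  have h1α : (0:ℝ) < 1 + α := by linarith
  set cl : ℝ := x ^ (2-p) / (2-p) with hcl
  have hclpos : 0 < cl := div_pos (rpow_pos_of_pos hx _) (by linarith)
  set cb : ℝ := (p-1) * x ^ (p-1) with hcb
  have hcbpos : 0 < cb := mul_pos (by linarith) (rpow_pos_of_pos hx _)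
  set K : ℝ := (cl / cb ^ α) ^ ((1:ℝ)/(1+α)) with hK
  have hKpos : 0 < K := rpow_pos_of_pos (div_pos hclpos (rpow_pos_of_pos hcbpos _)) _
  set es : ℝ := (cl / (16*K)) ^ ((1+α)/α) with hes
  have hespos : 0 < es := rpow_pos_of_pos (div_pos hclpos (by linarith)) _
  set ε : ℝ := min (x/4) es with hε
  have hε0 : 0 < ε := lt_min (by linarith) hespos
  have hεx2 : ε < x / 2 := lt_of_le_of_lt (min_le_left _ _) (by linarith)
  refine ⟨ε, 1, cl/2, ε^(-α) * (cl/2 + 8) * Real.exp 8, hε0, hεx2, one_pos, by positivity,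
    by positivity, 1, one_pos, ?_⟩
  intro h hh hh1 t ht htε
  -- key quantities
  set Λ : ℝ := x ^ (2-p) / (h * (2-p)) with hΛ
  have hΛpos : 0 < Λ := div_pos (rpow_pos_of_pos hx _) (mul_pos hh (by linarith))
  have hΛeq : Λ = cl / h := by rw [hΛ, hcl]; field_simp
  set β : ℝ := h * (p-1) * x ^ (p-1) with hβ
  have hβpos : 0 < β :=
    mul_pos (mul_pos hh (by linarith)) (rpow_pos_of_pos hx _)
  have hβeq : β = cb * h := by rw [hβ, hcb]; ring
  set A : ℝ := Λ * ε ^ α / β ^ α with hA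
  have hApos : 0 < A := by positivity
  set B : ℝ := 2 * (A+1) ^ ((1:ℝ)/(1+α)) with hB
  have hBpos : 0 < B := by positivity
  set P : ℝ := t ^ (α-1) * ε ^ (-α) with hP
  have hPpos : 0 < P := by positivity
  set i : ℕ → ℕ := fun j => (j+1) + Nat.floor (((j:ℝ)+1)*α) with hi
  have hiinj : Function.Injective i := by
    have : StrictMono i := by
      apply strictMono_nat_of_lt_succ
      intro j
      have hfl : Nat.floor (((j:ℝ)+1)*α) ≤ Nat.floor (((j:ℝ)+1+1)*α) := by
        apply Nat.floor_le_floor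
        nlinarith [hα]
      simp only [hi]
      push_cast
      omega
    exact this.injective
  set G : ℕ → ℝ := fun n => P * (2 * B * (2*B)^n / (n.factorial : ℝ)) with hG
  -- pointwise bound
  have hptwise : ∀ j : ℕ,
      ((x ^ (2 - p) / (h * (2 - p))) ^ (j + 1) / (Nat.factorial (j + 1) : ℝ)) *
        (t ^ (((j : ℝ) + 1) * α - 1) * Real.exp (-t / (h * (p - 1) * x ^ (p - 1)))
          / (Real.Gamma (((j : ℝ) + 1) * α)
              * (h * (p - 1) * x ^ (p - 1)) ^ (((j : ℝ) + 1) * α))) ≤ G (i j) := by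
    intro j
    have hjnn : (0:ℝ) ≤ (j:ℝ) := Nat.cast_nonneg j
    have hΓp : 0 < Real.Gamma (((j:ℝ)+1)*α) := Real.Gamma_pos_of_pos (by positivity)
    have hfacpos : (0:ℝ) < ((j+1).factorial : ℕ) := by exact_mod_cast (j+1).factorial_pos
    have hβk : (0:ℝ) < β ^ (((j:ℝ)+1)*α) := rpow_pos_of_pos hβpos _
    have hnum : t ^ (((j:ℝ)+1)*α - 1) * Real.exp (-t/β)
        ≤ t^(α-1) * (ε^(-α) * ε^(((j:ℝ)+1)*α)) := by
      have hexp : Real.exp (-t/β) ≤ 1 := by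
        rw [Real.exp_le_one_iff, neg_div]
        exact neg_nonpos_of_nonneg (by positivity)
      have h1 : t ^ (((j:ℝ)+1)*α - 1) * Real.exp (-t/β) ≤ t ^ (((j:ℝ)+1)*α - 1) := by
        nlinarith [rpow_pos_of_pos ht ((((j:ℝ)+1)*α - 1)), Real.exp_pos (-t/β)]
      refine h1.trans ?_
      have h2 : t ^ (((j:ℝ)+1)*α - 1) = t^(α-1) * t^(((j:ℝ)+1)*α - α) := by
        rw [← Real.rpow_add ht]; ring_nf
      have h3 : t^(((j:ℝ)+1)*α - α) ≤ ε^(((j:ℝ)+1)*α - α) := by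
        apply Real.rpow_le_rpow ht.le htε
        nlinarith
      have h4 : ε^(((j:ℝ)+1)*α - α) = ε^(-α) * ε^(((j:ℝ)+1)*α) := by
        rw [← Real.rpow_add hε0]; ring_nf
      rw [h2, ← h4]
      exact mul_le_mul_of_nonneg_left h3 (by positivity)
    have hAk : A^(j+1) = Λ^(j+1) * ε^(((j:ℝ)+1)*α) / β^(((j:ℝ)+1)*α) := by
      have he : ε^(((j:ℝ)+1)*α) = (ε^α)^(j+1) := by
        rw [← Real.rpow_natCast (ε^α) (j+1), ← Real.rpow_mul hε0.le]
        congr 1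
        push_cast; ring
      have hb : β^(((j:ℝ)+1)*α) = (β^α)^(j+1) := by
        rw [← Real.rpow_natCast (β^α) (j+1), ← Real.rpow_mul hβpos.le]
        congr 1
        push_cast; ring
      rw [he, hb, hA, div_pow, mul_pow]
    have hcb2 := core_bound α A hα hApos.le (j+1) (by omega)
    have hcast : ((j+1:ℕ):ℝ) = (j:ℝ)+1 := by push_cast; ring
    rw [hcast, ← hB] at hcb2
    have hij : i j = (j+1) + Nat.floor (((j:ℝ)+1)*α) := by simp only [hi]
    calc Λ^(j+1)/((j+1).factorial : ℕ) *
          (t ^ (((j:ℝ)+1)*α - 1) * Real.exp (-t/β)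
            / (Real.Gamma (((j:ℝ)+1)*α) * β^(((j:ℝ)+1)*α)))
        ≤ Λ^(j+1)/((j+1).factorial : ℕ) *
          ((t^(α-1) * (ε^(-α) * ε^(((j:ℝ)+1)*α)))
            / (Real.Gamma (((j:ℝ)+1)*α) * β^(((j:ℝ)+1)*α))) := by
          gcongr
      _ = P * (A^(j+1) / (((j+1).factorial : ℕ) * Real.Gamma (((j:ℝ)+1)*α))) := by
          rw [hP, hAk]
          field_simp
      _ ≤ P * (2 * B * (2*B)^(i j) / ((i j).factorial : ℝ)) := by
          apply mul_le_mul_of_nonneg_left _ hPpos.le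
          rw [hij]
          exact hcb2
      _ = G (i j) := by simp only [hG]
  have hnonneg : ∀ j : ℕ, 0 ≤
      ((x ^ (2 - p) / (h * (2 - p))) ^ (j + 1) / (Nat.factorial (j + 1) : ℝ)) *
        (t ^ (((j : ℝ) + 1) * α - 1) * Real.exp (-t / (h * (p - 1) * x ^ (p - 1)))
          / (Real.Gamma (((j : ℝ) + 1) * α)
              * (h * (p - 1) * x ^ (p - 1)) ^ (((j : ℝ) + 1) * α))) := by
    intro j
    have hΓp : 0 < Real.Gamma (((j : ℝ) + 1) * α) := by
      apply Real.Gamma_pos_of_pos; positivity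
    positivity
  have hGsummable : Summable G := by
    have hGeq : G = fun n => (P * (2*B)) * ((2*B)^n / (n.factorial : ℝ)) := by
      funext n; simp only [hG]; ring
    rw [hGeq]
    exact (Real.summable_pow_div_factorial (2*B)).mul_left _
  have hGnonneg : ∀ n, 0 ≤ G n := by
    intro n; simp only [hG]; positivity
  have hfsummable : Summable (fun j : ℕ =>
      ((x ^ (2 - p) / (h * (2 - p))) ^ (j + 1) / (Nat.factorial (j + 1) : ℝ)) *
        (t ^ (((j : ℝ) + 1) * α - 1) * Real.exp (-t / (h * (p - 1) * x ^ (p - 1)))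
          / (Real.Gamma (((j : ℝ) + 1) * α)
              * (h * (p - 1) * x ^ (p - 1)) ^ (((j : ℝ) + 1) * α)))) := by
    apply Summable.of_nonneg_of_le hnonneg hptwise
    exact hGsummable.comp_injective hiinj
  have htsum : (∑' j : ℕ,
      ((x ^ (2 - p) / (h * (2 - p))) ^ (j + 1) / (Nat.factorial (j + 1) : ℝ)) *
        (t ^ (((j : ℝ) + 1) * α - 1) * Real.exp (-t / (h * (p - 1) * x ^ (p - 1)))
          / (Real.Gamma (((j : ℝ) + 1) * α)
              * (h * (p - 1) * x ^ (p - 1)) ^ (((j : ℝ) + 1) * α))))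
      ≤ P * (2 * B) * Real.exp (2*B) := by
    have h1 := hfsummable.tsum_le_tsum_of_inj i hiinj (fun c _ => hGnonneg c) hptwise hGsummable
    refine h1.trans ?_
    have : ∀ n, G n = (P * (2*B)) * ((2*B)^n / (n.factorial : ℝ)) := by
      intro n; simp only [hG]; ring
    rw [tsum_congr this, tsum_mul_left, exp_tsum]
  -- final numeric bound
  have hfinal : Real.exp (-Λ) * (P * (2 * B) * Real.exp (2*B)) ≤
      (ε^(-α) * (cl/2 + 8) * Real.exp 8) * h ^ (-(1:ℝ)) * Real.exp (-(cl/2) / h) * t ^ (α - 1) := by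
    have hclh : 0 < cl / h := div_pos hclpos hh
    -- A in closed form
    have hAeq : A = cl * ε ^ α / (cb ^ α * (h ^ (1+α) : ℝ)) := by
      rw [hA, hΛeq, hβeq, Real.mul_rpow hcbpos.le hh.le, Real.rpow_add hh, Real.rpow_one]
      have h1 : cb ^ α ≠ 0 := ne_of_gt (rpow_pos_of_pos hcbpos _)
      have h2 : h ^ α ≠ 0 := ne_of_gt (rpow_pos_of_pos hh _)
      field_simp
    -- A^r = K * ε^(α r)/h
    have hexp1 : (1+α) * ((1:ℝ)/(1+α)) = 1 := by field_simp
    have hAr : A ^ ((1:ℝ)/(1+α)) = K * ε ^ (α * ((1:ℝ)/(1+α))) / h := by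
      rw [hAeq, Real.div_rpow (by positivity) (by positivity),
        Real.mul_rpow hclpos.le (by positivity),
        Real.mul_rpow (by positivity) (by positivity),
        ← Real.rpow_mul hε0.le, ← Real.rpow_mul hh.le, hexp1, Real.rpow_one, hK,
        Real.div_rpow hclpos.le (by positivity)]
      ring
    -- ε^(αr) ≤ es^(αr) and K * es^(αr) = cl/16
    have hcl16 : 0 < cl / (16*K) := div_pos hclpos (by linarith)
    have hKes : K * es ^ (α * ((1:ℝ)/(1+α))) = cl / 16 := by
      have he1 : es ^ (α * ((1:ℝ)/(1+α))) = cl / (16*K) := by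
        rw [hes, ← Real.rpow_mul hcl16.le]
        have hexp2 : (1+α)/α * (α * ((1:ℝ)/(1+α))) = 1 := by
          field_simp
        rw [hexp2, Real.rpow_one]
      rw [he1]
      field_simp
    have hεes : ε ^ (α * ((1:ℝ)/(1+α))) ≤ es ^ (α * ((1:ℝ)/(1+α))) :=
      Real.rpow_le_rpow hε0.le (min_le_right _ _) (by positivity)
    have hArle : A ^ ((1:ℝ)/(1+α)) ≤ (cl/h) / 16 := by
      rw [hAr]
      have hstep : K * ε ^ (α * ((1:ℝ)/(1+α))) ≤ cl/16 := by
        rw [← hKes]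
        exact mul_le_mul_of_nonneg_left hεes hKpos.le
      calc K * ε ^ (α*((1:ℝ)/(1+α))) / h ≤ (cl/16)/h := by gcongr
        _ = (cl/h)/16 := by ring
    -- (A+1)^r ≤ 2 A^r + 2
    have hr1 : (1:ℝ)/(1+α) ≤ 1 := by
      rw [div_le_one h1α]; linarith
    have h2r : (2:ℝ) ^ ((1:ℝ)/(1+α)) ≤ 2 := by
      calc (2:ℝ) ^ ((1:ℝ)/(1+α)) ≤ (2:ℝ) ^ (1:ℝ) :=
            Real.rpow_le_rpow_of_exponent_le one_le_two hr1
        _ = 2 := Real.rpow_one 2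
    have hsub : (A+1) ^ ((1:ℝ)/(1+α)) ≤ 2 * A ^ ((1:ℝ)/(1+α)) + 2 := by
      have hArnn : (0:ℝ) ≤ A ^ ((1:ℝ)/(1+α)) := (rpow_pos_of_pos hApos _).le
      rcases le_or_gt A 1 with hA1 | hA1
      · have : (A+1) ^ ((1:ℝ)/(1+α)) ≤ (2:ℝ) ^ ((1:ℝ)/(1+α)) :=
          Real.rpow_le_rpow (by linarith) (by linarith) (by positivity)
        linarith
      · have he : (A+1) ^ ((1:ℝ)/(1+α)) ≤ (2*A) ^ ((1:ℝ)/(1+α)) :=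
          Real.rpow_le_rpow (by linarith) (by linarith) (by positivity)
        have hm : (2*A) ^ ((1:ℝ)/(1+α)) = (2:ℝ)^((1:ℝ)/(1+α)) * A^((1:ℝ)/(1+α)) :=
          Real.mul_rpow (by norm_num) hApos.le
        nlinarith [rpow_pos_of_pos hApos ((1:ℝ)/(1+α))]
    -- 2B ≤ (cl/h)/2 + 8
    have hBle : 2 * B ≤ (cl/h)/2 + 8 := by
      rw [hB]
      nlinarith [hArle, hsub]
    -- exp bound
    have hexpb : Real.exp (-Λ) * Real.exp (2*B) ≤ Real.exp 8 * Real.exp (-(cl/2)/h) := by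
      rw [← Real.exp_add, ← Real.exp_add]
      apply Real.exp_le_exp.mpr
      have hd : -(cl/2)/h = -((cl/h)/2) := by ring
      rw [hΛeq, hd]
      linarith
    have h8h : (8:ℝ) ≤ 8 / h := by
      rw [le_div_iff₀ hh]; nlinarith
    have hsplit : (cl/2 + 8)/h = (cl/h)/2 + 8/h := by
      field_simp
    have hBle2 : 2 * B ≤ (cl/2 + 8)/h := by
      rw [hsplit]; linarith
    have hrw : h ^ (-(1:ℝ)) = 1/h := by
      rw [Real.rpow_neg hh.le, Real.rpow_one, one_div]
    calc Real.exp (-Λ) * (P * (2 * B) * Real.exp (2*B))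
        = (t^(α-1) * ε^(-α)) * ((2*B) * (Real.exp (-Λ) * Real.exp (2*B))) := by
          rw [hP]; ring
      _ ≤ (t^(α-1) * ε^(-α)) *
            (((cl/2 + 8)/h) * (Real.exp 8 * Real.exp (-(cl/2)/h))) := by
          apply mul_le_mul_of_nonneg_left _ (by positivity)
          apply mul_le_mul hBle2 hexpb (by positivity) (by positivity)
      _ = (ε^(-α) * (cl/2 + 8) * Real.exp 8) * h ^ (-(1:ℝ)) * Real.exp (-(cl/2)/h) * t^(α-1) := by
          rw [hrw]; field_simp
  calc Real.exp (-(x ^ (2 - p) / (h * (2 - p)))) * _ ≤ Real.exp (-Λ) * (P * (2 * B) * Real.exp (2*B)) := by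
        apply mul_le_mul_of_nonneg_left htsum (le_of_lt (Real.exp_pos _))
    _ ≤ _ := hfinal
end
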